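/- Let f : ℝ → ℝ be continuous with f(t) = 0 for t ≤ 0 and with t ↦ f(t)/t strictly increasing and positive on (0,∞), and set F(t) := ∫₀^t f(s) ds. Then for every v > 0, the function h(p) := (p²/2) f(v) v − F(p v) defined for p ≥ 0 attains a strict global maximum at p = 1; that is, h(p) < h(1) = (1/2) f(v) v − F(v) for every p ≥ 0 with p ≠ 1. -/

import Mathlib

open MeasureTheory Filter

theorem stmt14 (f : ℝ → ℝ) (hfcont : Continuous f) (hf0 : ∀ t ≤ (0:ℝ), f t = 0)
    (hmono : StrictMonoOn (fun t => f t / t) (Set.Ioi 0))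
    (hpos : ∀ t > (0:ℝ), 0 < f t / t)
    (F : ℝ → ℝ) (hF : ∀ t, F t = ∫ s in (0:ℝ)..t, f s)
    (v : ℝ) (hv : 0 < v) :
    ((1:ℝ) ^ 2 / 2 * (f v * v) - F (1 * v) = 1 / 2 * (f v * v) - F v) ∧
    ∀ p ≥ (0:ℝ), p ≠ 1 →
      p ^ 2 / 2 * (f v * v) - F (p * v) < 1 / 2 * (f v * v) - F v := by
  constructor
  · norm_num
  intro p hp hp1
  set c := f v / v with hc
  have hcv : c * v = f v := by rw [hc]; exact div_mul_cancel₀ _ hv.ne'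
  have hdiff : F v - F (p * v) = ∫ s in (p*v)..v, f s := by
    rw [hF, hF, ← intervalIntegral.integral_interval_sub_left
      (hfcont.intervalIntegrable 0 v) (hfcont.intervalIntegrable 0 (p*v))]
  have hlin : ∀ a b : ℝ, (∫ s in a..b, c * s) = c * ((b^2 - a^2)/2) := by
    intro a b
    rw [intervalIntegral.integral_const_mul, integral_id]
  rcases lt_or_gt_of_ne hp1 with h1 | h1
  · -- p < 1
    have hab : p * v < v := by nlinarith
    have key : (∫ s in (p*v)..v, f s) < ∫ s in (p*v)..v, c * s := by
      apply intervalIntegral.integral_lt_integral_of_continuousOn_of_le_of_exists_lt hab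
        hfcont.continuousOn (by fun_prop)
      · intro x hx
        have hx0 : 0 < x := lt_of_le_of_lt (by positivity) hx.1
        rcases eq_or_lt_of_le hx.2 with h | h
        · rw [h]; rw [hc]; field_simp; exact le_rfl
        · have := hmono hx0 hv h
          have : f x / x < c := this
          calc f x = (f x / x) * x := by field_simp
            _ ≤ c * x := by nlinarith
      · refine ⟨(p*v + v)/2, ⟨by linarith, by linarith⟩, ?_⟩
        set m := (p*v+v)/2
        have hm0 : 0 < m := by positivity
        have hmv : m < v := by simp only [m]; linarith
        have := hmono hm0 hv hmv
        have hlt : f m / m < c := this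
        calc f m = (f m / m) * m := by field_simp
          _ < c * m := by nlinarith
    have hq : c * ((v^2 - (p*v)^2)/2) = 1/2*(f v * v) - p^2/2*(f v * v) := by
      rw [hc]; field_simp
    rw [hlin] at key
    linarith [hdiff, key, hq]
  · -- p > 1
    have hab : v < p * v := by nlinarith
    have hdiff' : F (p * v) - F v = ∫ s in v..(p*v), f s := by
      rw [intervalIntegral.integral_symm] at hdiff
      linarith [hdiff]
    have key : (∫ s in v..(p*v), c * s) < ∫ s in v..(p*v), f s := by
      apply intervalIntegral.integral_lt_integral_of_continuousOn_of_le_of_exists_lt hab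
        (by fun_prop) hfcont.continuousOn
      · intro x hx
        have hx0 : 0 < x := hv.trans hx.1
        have := (hmono (Set.mem_Ioi.mpr hv) hx0 hx.1).le
        have hle : c ≤ f x / x := this
        calc c * x ≤ (f x / x) * x := by nlinarith
          _ = f x := by field_simp
      · refine ⟨(v + p*v)/2, ⟨by linarith, by linarith⟩, ?_⟩
        set m := (v+p*v)/2
        have hm0 : 0 < m := by positivity
        have hmv : v < m := by simp only [m]; linarith
        have := hmono (Set.mem_Ioi.mpr hv) (hv.trans hmv) hmv
        have hlt : c < f m / m := this
        calc c * m < (f m / m) * m := by nlinarith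
          _ = f m := by field_simp
    have hq : c * (((p*v)^2 - v^2)/2) = p^2/2*(f v * v) - 1/2*(f v * v) := by
      rw [hc]; field_simp
    rw [hlin] at key
    linarith [hdiff', key, hq]
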